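/- Let 0 < p < 1 and r ≥ 1. With g_NB(·; p, r) the mass function of the difference of two independent NB(p, r) random variables and h(k) = (-1)^k f_B(k; p/(1+p), r) as above, the discrete convolution (g_NB(·;p,r) ⋆ h)(k) equals ((1-p)^{2r}/(1+p)^{2r}) if k = 0 and 0 for all k ≠ 0. -/

import Mathlib

open Finset PowerSeries

lemma coeff_osp (r a : ℕ) : (PowerSeries.coeff (R := ℝ) a) ((1 - PowerSeries.X)^r)
    = if a ≤ r then ((-1:ℝ))^a * (r.choose a) else 0 := by
  rw [sub_pow]
  rw [map_sum]
  have hterm : ∀ m ∈ Finset.range (r+1),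
      (PowerSeries.coeff (R := ℝ) a) ((-1:ℝ⟦X⟧)^(m+r) * 1^m * X^(r-m) * (r.choose m : ℝ⟦X⟧))
      = if a = r - m then ((-1:ℝ))^(m+r) * (r.choose m) else 0 := by
    intro m hm
    have : ((-1:ℝ⟦X⟧)^(m+r) * 1^m * X^(r-m) * (r.choose m : ℝ⟦X⟧))
        = PowerSeries.C (R := ℝ) ((-1:ℝ)^(m+r) * (r.choose m)) * X^(r-m) := by
      simp only [map_mul, map_pow, map_neg, map_one, map_natCast]
      ring
    rw [this, PowerSeries.coeff_C_mul, PowerSeries.coeff_X_pow]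
    split <;> simp
  rw [Finset.sum_congr rfl hterm]
  by_cases ha : a ≤ r
  · rw [if_pos ha, Finset.sum_eq_single (r - a)]
    · simp only [show r - (r - a) = a by omega, if_pos rfl]
      rw [show r - a + r = a + 2 * (r - a) by omega, pow_add, pow_mul]
      norm_num
      rw [Nat.choose_symm ha]
    · intro m hm hne
      rw [if_neg]
      simp only [Finset.mem_range] at hm
      omega
    · intro h
      simp at h
  · rw [if_neg ha, Finset.sum_eq_zero]
    intro m hm
    rw [if_neg]
    simp only [Finset.mem_range] at hm
    omega

lemma comb_key (r : ℕ) (hr : 1 ≤ r) (n : ℕ) (hn : 1 ≤ n) :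
    ∑ i ∈ Finset.range (r+1), (if i ≤ n then ((-1:ℝ))^i * (r.choose i : ℝ) *
      (((n - i + r - 1).choose (n - i) : ℝ)) else 0) = 0 := by
  have hunit : ((1 - PowerSeries.X : ℝ⟦X⟧)^r) * (invOneSubPow ℝ r).val = 1 := by
    rw [← invOneSubPow_inv_eq_one_sub_pow]
    exact (invOneSubPow ℝ r).inv_mul
  have hcoeff := congrArg (PowerSeries.coeff (R := ℝ) n) hunit
  rw [invOneSubPow_val_eq_mk_sub_one_add_choose_of_pos ℝ r (show 0 < r by omega)] at hcoeff
  rw [PowerSeries.coeff_mul, PowerSeries.coeff_one, if_neg (show ¬ n = 0 by omega)] at hcoeff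
  rw [Finset.Nat.sum_antidiagonal_eq_sum_range_succ_mk] at hcoeff
  simp only [PowerSeries.coeff_mk, coeff_osp] at hcoeff
  -- hcoeff : ∑ i in range (n+1), (if i ≤ r then (-1)^i * C r i else 0) * C (r-1+(n-i)) (r-1) = 0
  set F : ℕ → ℝ := fun i => if i ≤ n then ((-1:ℝ))^i * (r.choose i : ℝ) *
      (((n - i + r - 1).choose (n - i) : ℝ)) else 0 with hF
  set G : ℕ → ℝ := fun i => (if i ≤ r then ((-1:ℝ))^i * (r.choose i : ℝ) else 0) *
      (((r - 1 + (n - i)).choose (r - 1) : ℝ)) with hG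
  have e1 : ∑ i ∈ Finset.range (min n r + 1), F i = ∑ i ∈ Finset.range (r+1), F i := by
    apply Finset.sum_subset (Finset.range_subset_range.2 (Nat.succ_le_succ (min_le_right n r)))
    intro i hi hni
    simp only [Finset.mem_range, Nat.lt_succ_iff, not_le] at hi hni
    rcases min_lt_iff.mp hni with hlt | hlt
    · exact if_neg (by omega)
    · exact absurd hi (by omega)
  have e2 : ∑ i ∈ Finset.range (min n r + 1), G i = ∑ i ∈ Finset.range (n+1), G i := by
    apply Finset.sum_subset (Finset.range_subset_range.2 (Nat.succ_le_succ (min_le_left n r)))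
    intro i hi hni
    simp only [Finset.mem_range, Nat.lt_succ_iff, not_le] at hi hni
    rcases min_lt_iff.mp hni with hlt | hlt
    · exact absurd hi (by omega)
    · simp only [hG, if_neg (show ¬ i ≤ r by omega), zero_mul]
  have e3 : ∀ i ∈ Finset.range (min n r + 1), F i = G i := by
    intro i hi
    simp only [Finset.mem_range, Nat.lt_succ_iff, le_min_iff] at hi
    simp only [hF, hG, if_pos hi.1, if_pos hi.2]
    have h1 : n - i + r - 1 = r - 1 + (n - i) := by omega
    rw [h1, show ((r-1+(n-i)).choose (n-i)) = ((r-1+(n-i)).choose (r-1)) from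
      Nat.choose_symm_add.symm]
  rw [← e1, Finset.sum_congr rfl e3, e2]
  exact hcoeff

/-- The differenced negative binomial pmf convolved with the alternating-sign
differenced-binomial pmf is `((1-p)/(1+p))^{2r}` times the delta at 0. -/
theorem stmt_11 (p : ℝ) (hp : 0 < p) (hp1 : p < 1) (r : ℕ) (hr : 1 ≤ r)
    (q : ℝ) (hq : q = p / (1 + p)) (b fB h nb gNB : ℤ → ℝ)
    (hb : ∀ m : ℤ, b m =
      if 0 ≤ m ∧ m ≤ (r : ℤ) then
        (r.choose m.toNat : ℝ) * q ^ m.toNat * (1 - q) ^ (r - m.toNat) else 0)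
    (hfB : ∀ k : ℤ, fB k = ∑' j : ℤ, b (k + j) * b j)
    (hh : ∀ k : ℤ, h k = (-1 : ℝ) ^ k * fB k)
    (hnb : ∀ m : ℤ, nb m =
      if 0 ≤ m then
        ((m.toNat + r - 1).choose m.toNat : ℝ) * p ^ m.toNat * (1 - p) ^ r else 0)
    (hg : ∀ k : ℤ, gNB k = ∑' j : ℤ, nb (k + j) * nb j) :
    ∀ k : ℤ, ∑ l ∈ Finset.Icc (-(r : ℤ)) (r : ℤ), gNB (k - l) * h l
      = if k = 0 then (1 - p) ^ (2 * r) / (1 + p) ^ (2 * r) else 0 := by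
  intro k
  have h1p : (0:ℝ) < 1 + p := by linarith
  have h1p' : (0:ℝ) ≤ 1 - p := by linarith
  set s : ℝ := (1+p)⁻¹ with hs
  have hq1 : 1 - q = s := by rw [hq, hs]; field_simp; ring
  have hqs : q = p * s := by rw [hq, hs]; field_simp
  set c : ℝ := (1-p)^r * s^r with hc
  have hb0 : ∀ m : ℤ, ¬(0 ≤ m ∧ m ≤ (r:ℤ)) → b m = 0 := fun m hm => by
    rw [hb m, if_neg hm]
  have hnb0 : ∀ m : ℤ, m < 0 → nb m = 0 := fun m hm => by
    rw [hnb m, if_neg (by omega)]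
  have hnbpos : ∀ m : ℤ, 0 ≤ nb m := by
    intro m; rw [hnb m]; split
    · exact mul_nonneg (mul_nonneg (Nat.cast_nonneg _) (pow_nonneg hp.le _))
        (pow_nonneg h1p' _)
    · exact le_rfl
  -- value of b at naturals
  have hbi : ∀ i : ℕ, i ≤ r → b (i:ℤ) = (r.choose i : ℝ) * (p^i * s^r) := by
    intro i hi
    rw [hb, if_pos ⟨Int.natCast_nonneg i, by exact_mod_cast hi⟩]
    rw [Int.toNat_natCast, hq1, hqs, mul_pow]
    have hss : s^i * s^(r-i) = s^r := by rw [← pow_add]; congr 1; omega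
    rw [← hss]; ring
  -- (-1)^(a-b) over ℤ
  have hone : ∀ bexp : ℤ, ((-1:ℝ))^bexp * ((-1:ℝ))^bexp = 1 := by
    intro bb
    rw [← zpow_add₀ (by norm_num : (-1:ℝ) ≠ 0), show bb + bb = 2 * bb by ring,
      zpow_mul]
    norm_num
  have zsub : ∀ a bexp : ℤ, ((-1:ℝ))^(a-bexp) = ((-1:ℝ))^a * ((-1:ℝ))^bexp := by
    intro a bb
    rw [zpow_sub₀ (by norm_num : (-1:ℝ) ≠ 0), div_eq_mul_inv,
      inv_eq_of_mul_eq_one_right (hone bb)]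
  -- conversion of Icc 0 r to range
  have hmap : Finset.Icc (0:ℤ) (r:ℤ) =
      Finset.map ⟨fun n : ℕ => (n : ℤ), Nat.cast_injective⟩ (Finset.range (r+1)) := by
    ext x
    simp only [Finset.mem_Icc, Finset.mem_map, Finset.mem_range, Function.Embedding.coeFn_mk]
    constructor
    · rintro ⟨h1, h2⟩; exact ⟨x.toNat, by omega, by omega⟩
    · rintro ⟨a, ha, rfl⟩; omega
  -- THE KEY IDENTITY (single convolution)
  have star : ∀ m : ℤ, ∑ l ∈ Finset.Icc (0:ℤ) (r:ℤ), nb (m - l) * ((-1:ℝ)^l * b l)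
      = if m = 0 then c else 0 := by
    intro m
    rw [hmap, Finset.sum_map]
    simp only [Function.Embedding.coeFn_mk, zpow_natCast]
    rcases lt_trichotomy m 0 with hm | hm | hm
    · rw [if_neg (by omega)]
      apply Finset.sum_eq_zero
      intro i _
      rw [hnb0 _ (by omega), zero_mul]
    · subst hm
      rw [if_pos rfl, Finset.sum_eq_single_of_mem 0 (by simp)]
      · rw [hbi 0 (by omega)]
        rw [show (0:ℤ) - (0:ℕ) = 0 by norm_num, hnb, if_pos le_rfl]
        norm_num [hc]
      · intro i _ hi
        rw [hnb0 _ (by omega), zero_mul]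
    · obtain ⟨n, rfl⟩ := Int.eq_ofNat_of_zero_le hm.le
      have hn : 1 ≤ n := by exact_mod_cast hm
      rw [if_neg (by omega)]
      have hterm : ∀ i ∈ Finset.range (r+1),
          nb ((n:ℤ) - (i:ℕ)) * ((-1:ℝ)^i * b (i:ℤ))
          = (c * p^n) * (if i ≤ n then ((-1:ℝ))^i * (r.choose i : ℝ) *
              (((n - i + r - 1).choose (n - i) : ℝ)) else 0) := by
        intro i hi
        simp only [Finset.mem_range, Nat.lt_succ_iff] at hi
        by_cases hin : i ≤ n
        · rw [if_pos hin, hbi i hi, hnb, if_pos (by omega)]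
          rw [show ((n:ℤ) - (i:ℕ)).toNat = n - i by omega]
          have hp' : p ^ (n - i) * p ^ i = p ^ n := by
            rw [← pow_add]; congr 1; omega
          rw [hc, ← hp']
          ring
        · rw [if_neg hin, hnb0 _ (by omega), zero_mul, mul_zero]
      rw [Finset.sum_congr rfl hterm, ← Finset.mul_sum, comb_key r hr n hn, mul_zero]
  -- summability of nb
  have hbpos : ∀ m : ℤ, 0 ≤ b m := by
    intro m; rw [hb m]; split
    · have hq0 : 0 ≤ q := by rw [hq]; positivity
      have hq1' : 0 ≤ 1 - q := by rw [hq1, hs]; positivity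
      exact mul_nonneg (mul_nonneg (Nat.cast_nonneg _) (pow_nonneg hq0 _))
        (pow_nonneg hq1' _)
    · exact le_rfl
  have hsum_nb : Summable nb := by
    apply Summable.of_nat_of_neg
    · -- Summable (fun i : ℕ => nb i)
      have key : Summable (fun i : ℕ => ((i:ℝ)+1)^(r-1) * p^i) := by
        have g := summable_pow_mul_geometric_of_norm_lt_one (r-1)
          (r := p) (by rw [Real.norm_eq_abs, abs_of_pos hp]; exact hp1)
        have g2 := (summable_nat_add_iff 1).mpr g
        have g3 := g2.mul_left p⁻¹
        apply g3.congr
        intro i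
        push_cast
        field_simp
        ring
      apply Summable.of_nonneg_of_le (fun i => hnbpos _)
        _ (key.mul_left ((1-p)^r * (r:ℝ)^(r-1)))
      intro i
      rw [hnb, if_pos (Int.natCast_nonneg i), Int.toNat_natCast]
      have hchoose : ((i + r - 1).choose i : ℝ) ≤ (r:ℝ)^(r-1) * ((i:ℝ)+1)^(r-1) := by
        have h1 : (i + r - 1).choose i = (i + (r-1)).choose i := by congr 1; omega
        have h2 : (i + (r-1)).choose i = (i + (r-1)).choose (r-1) := Nat.choose_symm_add
        have h3 : (i + (r-1)).choose (r-1) ≤ (i + (r-1))^(r-1) := Nat.choose_le_pow _ _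
        have h4 : (i + (r-1))^(r-1) ≤ ((i+1) * r)^(r-1) :=
          Nat.pow_le_pow_left (by
            have hir : i ≤ i * r := Nat.le_mul_of_pos_right i (by omega)
            have hh2 : (i+1) * r = i*r + r := by ring
            omega) _
        have : ((i + r - 1).choose i : ℝ) ≤ (((i+1) * r)^(r-1) : ℕ) := by
          exact_mod_cast (h1 ▸ h2 ▸ h3.trans h4)
        refine this.trans (le_of_eq ?_)
        push_cast
        rw [← mul_pow]
        congr 1
        ring
      calc ((i + r - 1).choose i : ℝ) * p ^ i * (1 - p) ^ r
          ≤ ((r:ℝ)^(r-1) * ((i:ℝ)+1)^(r-1)) * p ^ i * (1 - p) ^ r := by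
            apply mul_le_mul_of_nonneg_right _ (pow_nonneg h1p' r)
            exact mul_le_mul_of_nonneg_right hchoose (pow_nonneg hp.le i)
        _ = (1-p)^r * (r:ℝ)^(r-1) * (((i:ℝ)+1)^(r-1) * p^i) := by ring
    · -- negative side
      apply summable_of_ne_finset_zero (s := ({0} : Finset ℕ))
      intro i hi
      simp only [Finset.mem_singleton] at hi
      exact hnb0 _ (by omega)
  set T : ℝ := ∑' j : ℤ, nb j with hT
  have hnb_le_T : ∀ j : ℤ, nb j ≤ T := fun j => Summable.le_tsum hsum_nb j (fun i _ => hnbpos i)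
  have hsum_shift : ∀ a : ℤ, Summable (fun j : ℤ => nb (a + j) * nb j) := by
    intro a
    apply Summable.of_nonneg_of_le (fun j => mul_nonneg (hnbpos _) (hnbpos _))
      (fun j => mul_le_mul_of_nonneg_right (hnb_le_T _) (hnbpos _))
      (hsum_nb.mul_left T)
  -- fB as a finite sum
  have hfB' : ∀ kk : ℤ, fB kk = ∑ i ∈ Finset.Icc (0:ℤ) (r:ℤ), b (kk + i) * b i := by
    intro kk
    rw [hfB]
    apply tsum_eq_sum
    intro j hj
    rw [hb0 j (by simpa [Finset.mem_Icc] using hj), mul_zero]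
  -- step 1: pull the tsum out
  have step1 : ∀ l : ℤ, gNB (k - l) * h l = ∑' j : ℤ, (nb (k - l + j) * nb j) * h l := by
    intro l
    rw [hg, tsum_mul_right]
  -- per-j inner finite sum evaluation
  have claim : ∀ j : ℤ, (∑ l ∈ Finset.Icc (-(r:ℤ)) (r:ℤ), (nb (k - l + j) * nb j) * h l)
      = ∑ i ∈ Finset.Icc (0:ℤ) (r:ℤ),
          (if j = -(k+i) then (nb j * c) * ((-1:ℝ)^i * b i) else 0) := by
    intro j
    have expand : ∀ l : ℤ, (nb (k - l + j) * nb j) * h l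
        = ∑ i ∈ Finset.Icc (0:ℤ) (r:ℤ),
            (nb (k - l + j) * nb j) * ((-1:ℝ)^l * (b (l+i) * b i)) := by
      intro l
      rw [hh, hfB', Finset.mul_sum, Finset.mul_sum]
    rw [Finset.sum_congr rfl (fun l _ => expand l), Finset.sum_comm]
    apply Finset.sum_congr rfl
    intro i hi
    simp only [Finset.mem_Icc] at hi
    -- reindex l ↦ m = l + i
    have reidx : ∑ l ∈ Finset.Icc (-(r:ℤ)) (r:ℤ),
        (nb (k - l + j) * nb j) * ((-1:ℝ)^l * (b (l+i) * b i))
        = ∑ m ∈ Finset.Icc (-(r:ℤ) + i) ((r:ℤ) + i),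
        (nb (k - (m - i) + j) * nb j) * ((-1:ℝ)^(m-i) * (b m * b i)) := by
      rw [← Finset.map_add_right_Icc, Finset.sum_map]
      apply Finset.sum_congr rfl
      intro l _
      simp only [addRightEmbedding_apply, add_sub_cancel_right]
    rw [reidx]
    have shrink : ∑ m ∈ Finset.Icc (-(r:ℤ) + i) ((r:ℤ) + i),
        (nb (k - (m - i) + j) * nb j) * ((-1:ℝ)^(m-i) * (b m * b i))
        = ∑ m ∈ Finset.Icc (0:ℤ) (r:ℤ),
        (nb (k - (m - i) + j) * nb j) * ((-1:ℝ)^(m-i) * (b m * b i)) := by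
      symm
      apply Finset.sum_subset (Finset.Icc_subset_Icc (by omega) (by omega))
      intro m hm hm'
      simp only [Finset.mem_Icc] at hm hm'
      rw [hb0 m (by omega)]
      ring
    rw [shrink]
    have inner : ∑ m ∈ Finset.Icc (0:ℤ) (r:ℤ),
        (nb (k - (m - i) + j) * nb j) * ((-1:ℝ)^(m-i) * (b m * b i))
        = ((nb j * b i) * (-1:ℝ)^i) *
          ∑ m ∈ Finset.Icc (0:ℤ) (r:ℤ), nb ((k+i+j) - m) * ((-1:ℝ)^m * b m) := by
      rw [Finset.mul_sum]
      apply Finset.sum_congr rfl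
      intro m _
      rw [zsub, show k - (m - i) + j = (k+i+j) - m by ring]
      ring
    rw [inner, star]
    by_cases hj : j = -(k+i)
    · rw [if_pos (by omega), if_pos hj]
      ring
    · rw [if_neg (by omega), if_neg hj]
      ring
  -- assemble
  calc ∑ l ∈ Finset.Icc (-(r:ℤ)) (r:ℤ), gNB (k - l) * h l
      = ∑ l ∈ Finset.Icc (-(r:ℤ)) (r:ℤ), ∑' j : ℤ, (nb (k - l + j) * nb j) * h l := by
        exact Finset.sum_congr rfl (fun l _ => step1 l)
    _ = ∑' j : ℤ, ∑ l ∈ Finset.Icc (-(r:ℤ)) (r:ℤ), (nb (k - l + j) * nb j) * h l := by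
        symm
        apply Summable.tsum_finsetSum
        intro l _
        exact (hsum_shift (k - l)).mul_right (h l)
    _ = ∑' j : ℤ, ∑ i ∈ Finset.Icc (0:ℤ) (r:ℤ),
          (if j = -(k+i) then (nb j * c) * ((-1:ℝ)^i * b i) else 0) := by
        exact tsum_congr claim
    _ = ∑ i ∈ Finset.Icc (0:ℤ) (r:ℤ), ∑' j : ℤ,
          (if j = -(k+i) then (nb j * c) * ((-1:ℝ)^i * b i) else 0) := by
        apply Summable.tsum_finsetSum
        intro i _
        apply summable_of_ne_finset_zero (s := ({-(k+i)} : Finset ℤ))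
        intro j hj
        simp only [Finset.mem_singleton] at hj
        rw [if_neg hj]
    _ = ∑ i ∈ Finset.Icc (0:ℤ) (r:ℤ), (nb (-(k+i)) * c) * ((-1:ℝ)^i * b i) := by
        apply Finset.sum_congr rfl
        intro i _
        rw [tsum_congr (fun j => ?_), tsum_ite_eq (-(k+i))
          (fun _ => (nb (-(k+i)) * c) * ((-1:ℝ)^i * b i))]
        by_cases hj : j = -(k+i)
        · rw [if_pos hj, if_pos hj, hj]
        · rw [if_neg hj, if_neg hj]
    _ = c * ∑ i ∈ Finset.Icc (0:ℤ) (r:ℤ), nb ((-k) - i) * ((-1:ℝ)^i * b i) := by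
        rw [Finset.mul_sum]
        apply Finset.sum_congr rfl
        intro i _
        rw [show -(k+i) = (-k) - i by ring]
        ring
    _ = c * (if (-k) = 0 then c else 0) := by rw [star]
    _ = if k = 0 then (1 - p) ^ (2 * r) / (1 + p) ^ (2 * r) else 0 := by
        have hcsq : c * c = (1 - p) ^ (2 * r) / (1 + p) ^ (2 * r) := by
          rw [hc, hs]
          field_simp
          have h1 : (1/(1+p))^r * (1+p)^r = 1 := by
            rw [← mul_pow, one_div, inv_mul_cancel₀ h1p.ne', one_pow]
          rw [show 2*r = r*2 by ring, pow_mul, pow_mul, mul_assoc, ← mul_pow, h1, one_pow, mul_one]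
        by_cases hk : k = 0
        · rw [if_pos (by omega), if_pos hk, hcsq]
        · rw [if_neg (by omega), if_neg hk, mul_zero]
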